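/- Let n ≥ 1 and let F : ℝ^n → ℝ be nonnegative and L-Lipschitz continuous for some L > 0. Let x_0 ∈ ℝ^n and M := F(x_0) > 0. Then ∫_{B_R(x_0)} F²(x) dx ≥ (2ω_n / ((n+1)(n+2))) · M^{n+2}/L^n, where ω_n is the volume of the unit ball in ℝ^n and R = M/L. -/

import Mathlib

open MeasureTheory Metric Set Filter
open scoped RealInnerProductSpace NNReal ENNReal

noncomputable section

/-- Surface measure on `ℝ^d`: the `(d-1)`-dimensional Hausdorff measure
(its restriction to the unit sphere is the surface measure of `∂B₁`). -/
abbrev surfMeasure (d : ℕ) : Measure (EuclideanSpace ℝ (Fin d)) := μH[(d : ℝ) - 1]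

/-- The Weiss boundary adjusted energy
`W₀(u) = ∫_{B₁} |∇u|² - 2 ∫_{∂B₁} u² dℋ^{d-1}`. -/
noncomputable def W0 (d : ℕ) (u : EuclideanSpace ℝ (Fin d) → ℝ) : ℝ :=
  (∫ x in Metric.ball (0 : EuclideanSpace ℝ (Fin d)) 1, ‖gradient u x‖ ^ 2) -
    2 * ∫ x in Metric.sphere (0 : EuclideanSpace ℝ (Fin d)) 1, u x ^ 2 ∂(surfMeasure d)

/-- The Weiss boundary adjusted energy `W(u) = W₀(u) + ∫_{B₁} u`. -/
noncomputable def W (d : ℕ) (u : EuclideanSpace ℝ (Fin d) → ℝ) : ℝ :=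
  W0 d u + ∫ x in Metric.ball (0 : EuclideanSpace ℝ (Fin d)) 1, u x

/-- Membership in `H¹(B₁)`: the function and its gradient are square integrable on `B₁`. -/
def MemH1 (d : ℕ) (u : EuclideanSpace ℝ (Fin d) → ℝ) : Prop :=
  MemLp u 2 (volume.restrict (Metric.ball (0 : EuclideanSpace ℝ (Fin d)) 1)) ∧
  MemLp (fun x => ‖gradient u x‖) 2
    (volume.restrict (Metric.ball (0 : EuclideanSpace ℝ (Fin d)) 1))

/-- The zero-homogeneous extension of a function on the sphere. -/
def zeroExt (d : ℕ) (c : EuclideanSpace ℝ (Fin d) → ℝ) : EuclideanSpace ℝ (Fin d) → ℝ :=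
  fun x => c (‖x‖⁻¹ • x)

/-- The tangential gradient `∇_θ` on the sphere, computed via the 0-homogeneous extension. -/
noncomputable def tgrad (d : ℕ) (c : EuclideanSpace ℝ (Fin d) → ℝ) :
    EuclideanSpace ℝ (Fin d) → EuclideanSpace ℝ (Fin d) :=
  fun θ => gradient (zeroExt d c) θ

/-- Membership in `H¹(∂B₁)`. -/
def MemH1S (d : ℕ) (c : EuclideanSpace ℝ (Fin d) → ℝ) : Prop :=
  MemLp c 2 ((surfMeasure d).restrict (Metric.sphere (0 : EuclideanSpace ℝ (Fin d)) 1)) ∧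
  MemLp (fun θ => ‖tgrad d c θ‖) 2
    ((surfMeasure d).restrict (Metric.sphere (0 : EuclideanSpace ℝ (Fin d)) 1))

/-- The class `𝒮` of 2-homogeneous polynomials `Q_A(x) = x ⬝ A x` with `A` symmetric
non-negative and `tr A = 1/4`. -/
def Sset (d : ℕ) : Set (EuclideanSpace ℝ (Fin d) → ℝ) :=
  {Q | ∃ A : Matrix (Fin d) (Fin d) ℝ, A.PosSemidef ∧ A.trace = 1 / 4 ∧
        ∀ x, Q x = ∑ i, ∑ j, x i * (A i j * x j)}

/-- `W(𝒮)`: the common value of `W` on `𝒮` (computed on `|x|²/(4d) ∈ 𝒮`). -/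
noncomputable def WS (d : ℕ) : ℝ := W d fun x => ‖x‖ ^ 2 / (4 * d)

/-- The `L²(∂B₁)` distance of `c` to the set `𝒮`. -/
noncomputable def distS (d : ℕ) (c : EuclideanSpace ℝ (Fin d) → ℝ) : ℝ :=
  ⨅ Q : Sset d, Real.sqrt (∫ θ in Metric.sphere (0 : EuclideanSpace ℝ (Fin d)) 1,
    (c θ - (Q : EuclideanSpace ℝ (Fin d) → ℝ) θ) ^ 2 ∂(surfMeasure d))

/-- The `α`-homogeneous extension of a function on the sphere:
`(r,θ) ↦ r^α c(θ)` in polar coordinates. -/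
noncomputable def homExt (d : ℕ) (α : ℝ) (c : EuclideanSpace ℝ (Fin d) → ℝ) :
    EuclideanSpace ℝ (Fin d) → ℝ :=
  fun x => ‖x‖ ^ α * c (‖x‖⁻¹ • x)

/-- The functional `ℱ(φ) = ∫_{∂B₁} (|∇_θ φ|² - 2dφ² + φ) dℋ^{d-1}`. -/
noncomputable def Ffun (d : ℕ) (φ : EuclideanSpace ℝ (Fin d) → ℝ) : ℝ :=
  ∫ θ in Metric.sphere (0 : EuclideanSpace ℝ (Fin d)) 1,
    (‖tgrad d φ θ‖ ^ 2 - 2 * d * φ θ ^ 2 + φ θ) ∂(surfMeasure d)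

/-- The Euclidean Laplacian. -/
noncomputable def eucLap (d : ℕ) (f : EuclideanSpace ℝ (Fin d) → ℝ) :
    EuclideanSpace ℝ (Fin d) → ℝ :=
  fun x => ∑ i : Fin d,
    iteratedFDeriv ℝ 2 f x ![EuclideanSpace.single i 1, EuclideanSpace.single i 1]

/-- The Laplace–Beltrami operator `Δ_{∂B₁}` on the sphere, computed via the
0-homogeneous extension. -/
noncomputable def sphereLap (d : ℕ) (c : EuclideanSpace ℝ (Fin d) → ℝ) :
    EuclideanSpace ℝ (Fin d) → ℝ :=
  eucLap d (zeroExt d c)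

/-- `∇ℱ(φ) = -2Δ_{∂B₁}φ - 4dφ + 1`. -/
noncomputable def gradF (d : ℕ) (φ : EuclideanSpace ℝ (Fin d) → ℝ) :
    EuclideanSpace ℝ (Fin d) → ℝ :=
  fun θ => -2 * sphereLap d φ θ - 4 * d * φ θ + 1

/-- `u` solves the obstacle problem in `B₁`. -/
def IsObstacleSol (d : ℕ) (u : EuclideanSpace ℝ (Fin d) → ℝ) : Prop :=
  (∀ x ∈ Metric.ball (0 : EuclideanSpace ℝ (Fin d)) 1, 0 ≤ u x) ∧
  ∀ v : EuclideanSpace ℝ (Fin d) → ℝ, MemH1 d v →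
    (∀ x ∈ Metric.ball (0 : EuclideanSpace ℝ (Fin d)) 1, 0 ≤ v x) →
    (∀ x ∈ Metric.sphere (0 : EuclideanSpace ℝ (Fin d)) 1, u x = v x) →
    (∫ x in Metric.ball (0 : EuclideanSpace ℝ (Fin d)) 1, (‖gradient u x‖ ^ 2 + u x)) ≤
      ∫ x in Metric.ball (0 : EuclideanSpace ℝ (Fin d)) 1, (‖gradient v x‖ ^ 2 + v x)

/-- The positivity set `Ω_u = {u > 0}`. -/
def posSet (d : ℕ) (u : EuclideanSpace ℝ (Fin d) → ℝ) : Set (EuclideanSpace ℝ (Fin d)) :=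
  {x | x ∈ Metric.ball (0 : EuclideanSpace ℝ (Fin d)) 1 ∧ 0 < u x}

/-- The singular set `Sing(∂Ω_u)`: free boundary points of full density. -/
def SingSet (d : ℕ) (u : EuclideanSpace ℝ (Fin d) → ℝ) : Set (EuclideanSpace ℝ (Fin d)) :=
  {x₀ | x₀ ∈ frontier (posSet d u) ∧
    Filter.Tendsto
      (fun r => volume (Metric.ball x₀ r ∩ posSet d u) / volume (Metric.ball x₀ r))
      (nhdsWithin 0 (Set.Ioi 0)) (nhds 1)}

/-- The parabolic rescaling `u_{r,x₀}(x) = u(x₀ + rx)/r²`. -/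
noncomputable def blowupSeq (d : ℕ) (u : EuclideanSpace ℝ (Fin d) → ℝ)
    (x₀ : EuclideanSpace ℝ (Fin d)) (r : ℝ) : EuclideanSpace ℝ (Fin d) → ℝ :=
  fun x => u (x₀ + r • x) / r ^ 2

/-- `Q` is the blow-up limit of `u` at `x₀` along the full limit `r → 0⁺`,
in the `L²(∂B₁)` sense. -/
def IsBlowupLimit (d : ℕ) (u Q : EuclideanSpace ℝ (Fin d) → ℝ)
    (x₀ : EuclideanSpace ℝ (Fin d)) : Prop :=
  Filter.Tendsto
    (fun r => Real.sqrt (∫ θ in Metric.sphere (0 : EuclideanSpace ℝ (Fin d)) 1,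
      (blowupSeq d u x₀ r θ - Q θ) ^ 2 ∂(surfMeasure d)))
    (nhdsWithin 0 (Set.Ioi 0)) (nhds 0)

open intervalIntegral in

theorem lip_sq_aux (n : ℕ) (hn : 1 ≤ n)
    (F : EuclideanSpace ℝ (Fin n) → ℝ) (hF : ∀ x, 0 ≤ F x)
    (L : ℝ) (hL : 0 < L) (hlip : ∀ x y, |F x - F y| ≤ L * dist x y)
    (x₀ : EuclideanSpace ℝ (Fin n)) (hM : 0 < F x₀) :
    2 * (volume (Metric.ball (0 : EuclideanSpace ℝ (Fin n)) 1)).toReal /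
        ((n + 1) * (n + 2)) * (F x₀ ^ (n + 2) / L ^ n) ≤
      ∫ x in Metric.ball x₀ (F x₀ / L), F x ^ 2 := by
  obtain ⟨m, rfl⟩ : ∃ m, n = m + 1 := ⟨n - 1, (Nat.succ_pred_eq_of_pos hn).symm⟩
  set M := F x₀ with hMdef
  set R := M / L with hR
  have hRpos : 0 < R := div_pos hM hL
  set g : ℝ → ℝ := fun r => max (M - L * r) 0 with hg
  have hFcont : Continuous F := by
    refine LipschitzWith.continuous (K := L.toNNReal) (LipschitzWith.of_dist_le_mul ?_)
    intro x y
    rw [Real.dist_eq, Real.coe_toNNReal _ hL.le]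
    exact hlip x y
  have hgcont : Continuous g :=
    (continuous_const.sub (continuous_const.mul continuous_id)).max continuous_const
  have hgnonneg : ∀ r, 0 ≤ g r := fun r => le_max_right _ _
  have hptwise : ∀ x, g ‖x - x₀‖ ^ 2 ≤ F x ^ 2 := by
    intro x
    have h1 : g ‖x - x₀‖ ≤ F x := by
      refine max_le ?_ (hF x)
      have h2 := (abs_le.1 (hlip x₀ x)).2
      have hd : dist x₀ x = ‖x - x₀‖ := by rw [dist_comm, dist_eq_norm]
      rw [hd] at h2
      rw [hMdef]
      linarith
    exact pow_le_pow_left₀ (hgnonneg _) h1 2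
  have hgzero : ∀ r : ℝ, R ≤ r → g r = 0 := by
    intro r hr
    apply max_eq_right
    have h3 : M ≤ L * r := by
      calc M = L * (M / L) := by field_simp
        _ ≤ L * r := mul_le_mul_of_nonneg_left hr hL.le
    linarith
  have hFint : IntegrableOn (fun x => F x ^ 2) (ball x₀ R) :=
    (((hFcont.pow 2).continuousOn.integrableOn_compact
      (isCompact_closedBall x₀ R)).mono_set ball_subset_closedBall)
  have hgint : IntegrableOn (fun x => g ‖x - x₀‖ ^ 2) (ball x₀ R) :=
    ((((hgcont.comp ((continuous_id.sub continuous_const).norm)).pow 2).continuousOn.integrableOn_compact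
      (isCompact_closedBall x₀ R)).mono_set ball_subset_closedBall)
  have step1 : (∫ x in ball x₀ R, g ‖x - x₀‖ ^ 2) ≤ ∫ x in ball x₀ R, F x ^ 2 :=
    setIntegral_mono_on hgint hFint measurableSet_ball (fun x _ => hptwise x)
  have step2 : (∫ x in ball x₀ R, g ‖x - x₀‖ ^ 2)
      = ∫ x : EuclideanSpace ℝ (Fin (m + 1)), g ‖x‖ ^ 2 := by
    rw [setIntegral_eq_integral_of_forall_compl_eq_zero]
    · exact integral_sub_right_eq_self (fun x => g ‖x‖ ^ 2) x₀
    · intro x hx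
      rw [mem_ball, not_lt, dist_eq_norm] at hx
      rw [hgzero _ hx]
      norm_num
  have step3 : (∫ x : EuclideanSpace ℝ (Fin (m + 1)), g ‖x‖ ^ 2)
      = (m + 1 : ℕ) * (volume (ball (0 : EuclideanSpace ℝ (Fin (m + 1))) 1)).toReal *
        ∫ y in Ioi (0:ℝ), y ^ m * g y ^ 2 := by
    have h := integral_fun_norm_addHaar (volume : Measure (EuclideanSpace ℝ (Fin (m + 1))))
      (fun r => g r ^ 2)
    rw [h]
    simp only [finrank_euclideanSpace_fin, smul_eq_mul, nsmul_eq_mul, Nat.add_sub_cancel, measureReal_def]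
    ring
  have hLR : L * R = M := by rw [hR]; field_simp
  have step4 : (∫ y in Ioi (0:ℝ), y ^ m * g y ^ 2)
      = ∫ y in Ioc (0:ℝ) R, y ^ m * (M - L * y) ^ 2 := by
    have hcongr : ∀ y ∈ Ioi (0:ℝ), y ^ m * g y ^ 2
        = indicator (Ioc (0:ℝ) R) (fun y => y ^ m * (M - L * y) ^ 2) y := by
      intro y hy
      by_cases h : y ≤ R
      · rw [Set.indicator_of_mem (Set.mem_Ioc.mpr ⟨hy, h⟩)]
        have hgy : g y = M - L * y := by
          apply max_eq_left
          nlinarith [mul_le_mul_of_nonneg_left h hL.le]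
        rw [hgy]
      · rw [Set.indicator_of_notMem (fun hmem => h hmem.2), hgzero y (le_of_not_ge h)]
        ring
    rw [setIntegral_congr_fun measurableSet_Ioi hcongr, setIntegral_indicator measurableSet_Ioc,
      inter_eq_right.2 (fun y hy => hy.1)]
  have step5 : (∫ y in Ioc (0:ℝ) R, y ^ m * (M - L * y) ^ 2)
      = M ^ 2 * (R ^ (m + 1) / (m + 1)) - 2 * M * L * (R ^ (m + 2) / (m + 2))
        + L ^ 2 * (R ^ (m + 3) / (m + 3)) := by
    rw [← intervalIntegral.integral_of_le hRpos.le]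
    have expand : ∀ y : ℝ, y ^ m * (M - L * y) ^ 2
        = M ^ 2 * y ^ m - 2 * M * L * y ^ (m + 1) + L ^ 2 * y ^ (m + 2) := fun y => by ring
    simp_rw [expand]
    rw [intervalIntegral.integral_add (((intervalIntegral.intervalIntegrable_pow m).const_mul _).sub
        ((intervalIntegral.intervalIntegrable_pow (m+1)).const_mul _)) ((intervalIntegral.intervalIntegrable_pow (m+2)).const_mul _),
      intervalIntegral.integral_sub ((intervalIntegral.intervalIntegrable_pow m).const_mul _)
        ((intervalIntegral.intervalIntegrable_pow (m+1)).const_mul _),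
      intervalIntegral.integral_const_mul, intervalIntegral.integral_const_mul,
      intervalIntegral.integral_const_mul, integral_pow, integral_pow, integral_pow]
    push_cast
    ring_nf
  have hm1 : ((m:ℝ) + 1) ≠ 0 := by positivity
  have hm2 : ((m:ℝ) + 2) ≠ 0 := by positivity
  have hm3 : ((m:ℝ) + 3) ≠ 0 := by positivity
  have final : 2 * (volume (ball (0 : EuclideanSpace ℝ (Fin (m + 1))) 1)).toReal /
        ((↑(m + 1) + 1) * (↑(m + 1) + 2)) * (F x₀ ^ (m + 1 + 2) / L ^ (m + 1))
      = (m + 1 : ℕ) * (volume (ball (0 : EuclideanSpace ℝ (Fin (m + 1))) 1)).toReal *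
        (M ^ 2 * (R ^ (m + 1) / (m + 1)) - 2 * M * L * (R ^ (m + 2) / (m + 2))
          + L ^ 2 * (R ^ (m + 3) / (m + 3))) := by
    rw [hR, ← hMdef, div_pow, div_pow, div_pow]
    push_cast
    field_simp
    ring
  calc 2 * (volume (ball (0 : EuclideanSpace ℝ (Fin (m + 1))) 1)).toReal /
        ((↑(m + 1) + 1) * (↑(m + 1) + 2)) * (F x₀ ^ (m + 1 + 2) / L ^ (m + 1))
      = ∫ x in ball x₀ R, g ‖x - x₀‖ ^ 2 := by
        rw [step2, step3, step4, step5, final]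
    _ ≤ ∫ x in ball x₀ R, F x ^ 2 := step1


/-- **Lemma 3.2**: lower bound on the `L²` norm of a non-negative `L`-Lipschitz function
in terms of its value at a point. -/
theorem lipschitz_sq_integral_lower_bound (n : ℕ) (hn : 1 ≤ n)
    (F : EuclideanSpace ℝ (Fin n) → ℝ) (hF : ∀ x, 0 ≤ F x)
    (L : ℝ) (hL : 0 < L) (hlip : ∀ x y, |F x - F y| ≤ L * dist x y)
    (x₀ : EuclideanSpace ℝ (Fin n)) (hM : 0 < F x₀) :
    2 * (volume (Metric.ball (0 : EuclideanSpace ℝ (Fin n)) 1)).toReal /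
        ((n + 1) * (n + 2)) * (F x₀ ^ (n + 2) / L ^ n) ≤
      ∫ x in Metric.ball x₀ (F x₀ / L), F x ^ 2 :=
  lip_sq_aux n hn F hF L hL hlip x₀ hM
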